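/- Let φ : W → W be a dominant endomorphism of a projective variety W defined over a number field K, and suppose the global height expansion coefficient satisfies μ(φ) > 1. Then for every ample divisor E on W, the set of preperiodic points Preper(φ) is a set of bounded height with respect to h_E. -/

import Mathlib

/-!
Abstract setup for a projective variety `W` defined over a number field `K`:
`Point = W(K̄)` with the Zariski topology, `Pic = Pic(W) ⊗ ℝ` with its ample cone
`IsAmple`, and `height D` a choice of Weil height `h_D` for each class `D`, satisfying
the standard properties of the Weil height machine.  A morphism is dominant if its
image is Zariski dense.
-/

/-- The height expansion coefficient `μ₁(φ, D) = sup {α | φ*D - α•D is ample}`. -/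
noncomputable def heightExpansionCoeff {Pic : Type*} [AddCommGroup Pic] [Module ℝ Pic]
    (IsAmple : Pic → Prop) (φpull : Pic →ₗ[ℝ] Pic) (D : Pic) : ℝ :=
  sSup {α : ℝ | IsAmple (φpull D - α • D)}

/-- The global height expansion coefficient `μ(φ) = sup {μ₁(φ,D) | D ample}`. -/
noncomputable def globalHeightExpansionCoeff {Pic : Type*} [AddCommGroup Pic] [Module ℝ Pic]
    (IsAmple : Pic → Prop) (φpull : Pic →ₗ[ℝ] Pic) : ℝ :=
  sSup {x : ℝ | ∃ D : Pic, IsAmple D ∧ x = heightExpansionCoeff IsAmple φpull D}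

/-- A point `P` is preperiodic for `φ` if its forward orbit `{φⁿ(P) : n ≥ 0}` is finite. -/
def IsPreperiodic {Point : Type*} (φ : Point → Point) (P : Point) : Prop :=
  (Set.range fun n : ℕ => φ^[n] P).Finite

/-- Let `φ : W → W` be a dominant endomorphism of a projective variety `W`
defined over a number field `K`, and suppose the global height expansion coefficient
satisfies `μ(φ) > 1`.  Then for every ample divisor `E` on `W`, the set of preperiodic
points of `φ` is a set of bounded height with respect to `h_E`. -/
theorem preperiodic_bounded_height_of_globalCoeff_gt_one
    {Point : Type*} [TopologicalSpace Point]
    {Pic : Type*} [AddCommGroup Pic] [Module ℝ Pic]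
    (IsAmple : Pic → Prop)
    (isAmple_add : ∀ {D E : Pic}, IsAmple D → IsAmple E → IsAmple (D + E))
    (isAmple_smul : ∀ {D : Pic} {t : ℝ}, 0 < t → IsAmple D → IsAmple (t • D))
    (isAmple_open : ∀ {D : Pic} (E : Pic), IsAmple D →
      ∃ ε > 0, ∀ t : ℝ, |t| ≤ ε → IsAmple (D + t • E))
    (height : Pic → Point → ℝ)
    (height_add : ∀ D E : Pic, ∃ C : ℝ, ∀ P : Point,
      |height (D + E) P - (height D P + height E P)| ≤ C)
    (height_smul : ∀ (t : ℝ) (D : Pic), ∃ C : ℝ, ∀ P : Point,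
      |height (t • D) P - t * height D P| ≤ C)
    (height_lower : ∀ D : Pic, IsAmple D → ∃ C : ℝ, ∀ P : Point, -C ≤ height D P)
    (φ : Point → Point) (hφcont : Continuous φ) (hφdom : DenseRange φ)
    (φpull : Pic →ₗ[ℝ] Pic)
    (height_pull : ∀ D : Pic, ∃ C : ℝ, ∀ P : Point,
      |height D (φ P) - height (φpull D) P| ≤ C)
    (hμ : 1 < globalHeightExpansionCoeff IsAmple φpull) :
    ∀ E : Pic, IsAmple E → ∃ B : ℝ, ∀ P : Point, IsPreperiodic φ P → height E P ≤ B := by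

  intro E hE
  -- Step 1: find an ample D with height expansion coefficient > 1
  have h1 : ∃ D : Pic, IsAmple D ∧ 1 < heightExpansionCoeff IsAmple φpull D := by
    by_contra hc
    push_neg at hc
    have hle : globalHeightExpansionCoeff IsAmple φpull ≤ 1 := by
      apply Real.sSup_le _ zero_le_one
      rintro x ⟨D, hD, rfl⟩
      exact hc D hD
    linarith
  obtain ⟨D, hD, hcD⟩ := h1
  -- Step 2: find α > 1 with φ*D - α•D ample
  have h2 : ∃ α : ℝ, 1 < α ∧ IsAmple (φpull D - α • D) := by
    by_contra hc
    push_neg at hc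
    have hle : heightExpansionCoeff IsAmple φpull D ≤ 1 := by
      apply Real.sSup_le _ zero_le_one
      intro β hβ
      by_contra h
      exact hc β (lt_of_not_ge h) hβ
    unfold heightExpansionCoeff at hcD
    unfold heightExpansionCoeff at hle
    linarith
  obtain ⟨α, hα, hA⟩ := h2
  set A := φpull D - α • D with hAdef
  obtain ⟨C1, hC1⟩ := height_pull D
  obtain ⟨C2, hC2⟩ := height_add (α • D) A
  obtain ⟨C3, hC3⟩ := height_smul α D
  obtain ⟨C4, hC4⟩ := height_lower A hA
  have hsum : α • D + A = φpull D := by rw [hAdef]; abel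
  set C := C1 + C2 + C3 + C4 with hCdef
  -- Key height inequality
  have key : ∀ P : Point, α * height D P - C ≤ height D (φ P) := by
    intro P
    have k1 := hC1 P
    have k2 := hC2 P
    have k3 := hC3 P
    have k4 := hC4 P
    rw [hsum] at k2
    rw [abs_le] at k1 k2 k3
    have := k1.1
    have := k2.1
    have := k3.1
    linarith
  have hα1 : (0:ℝ) < α - 1 := by linarith
  set B0 := C / (α - 1) with hB0def
  have hBC : (α - 1) * B0 = C := by
    rw [hB0def]; field_simp
  -- Iterated inequality
  have iter : ∀ (P : Point) (n : ℕ),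
      α ^ n * (height D P - B0) + B0 ≤ height D (φ^[n] P) := by
    intro P n
    induction n with
    | zero => simp
    | succ n ih =>
      have hk := key (φ^[n] P)
      rw [Function.iterate_succ_apply']
      have hmul : α * (α ^ n * (height D P - B0) + B0) ≤ α * height D (φ^[n] P) :=
        mul_le_mul_of_nonneg_left ih (by linarith)
      have heq : α ^ (n + 1) * (height D P - B0) + B0
          = α * (α ^ n * (height D P - B0) + B0) - C := by
        rw [pow_succ]; linear_combination -hBC
      linarith
  -- Heights of preperiodic points w.r.t. D are bounded by B0
  have hDbound : ∀ P : Point, IsPreperiodic φ P → height D P ≤ B0 := by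
    intro P hP
    obtain ⟨M, hM⟩ := (hP.image (height D)).bddAbove
    have hMn : ∀ n : ℕ, height D (φ^[n] P) ≤ M := fun n =>
      hM ⟨_, ⟨n, rfl⟩, rfl⟩
    by_contra h
    push_neg at h
    have hX : 0 < height D P - B0 := by linarith
    obtain ⟨n, hn⟩ := pow_unbounded_of_one_lt ((M - B0) / (height D P - B0)) hα
    have hn' : M - B0 < α ^ n * (height D P - B0) := by
      rw [div_lt_iff₀ hX] at hn
      linarith
    have := iter P n
    have := hMn n
    linarith
  -- Compare height E with height D
  obtain ⟨ε, hε, hopen⟩ := isAmple_open E hD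
  have hA' : IsAmple (D + (-ε) • E) := hopen (-ε) (by rw [abs_neg, abs_of_pos hε])
  set A' := D + (-ε) • E with hA'def
  obtain ⟨C5, hC5⟩ := height_lower A' hA'
  obtain ⟨C6, hC6⟩ := height_add A' (ε • E)
  obtain ⟨C7, hC7⟩ := height_smul ε E
  have hsum' : A' + ε • E = D := by
    rw [hA'def, neg_smul]; abel
  have hcomp : ∀ P : Point, ε * height E P ≤ height D P + (C5 + C6 + C7) := by
    intro P
    have k2 := hC6 P
    have k3 := hC7 P
    have k4 := hC5 P
    rw [hsum'] at k2
    rw [abs_le] at k2 k3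
    have := k2.2
    have := k3.2
    linarith
  refine ⟨(B0 + (C5 + C6 + C7)) / ε, fun P hP => ?_⟩
  rw [le_div_iff₀ hε]
  have h1 := hDbound P hP
  have h2 := hcomp P
  linarith
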